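/- (Corollary 5) Let Σ be a finite d-dimensional simplicial complex (d ≥ 1) with β_d(Σ) ≥ 1 such that the space Z_d(Σ) of Z_2 d-cycles admits a 2-complete basis (by Theorem 2 of the paper, this holds whenever Σ is PL embeddable into ℝ^{d+1}). Then d·f_d(Σ) ≤ (d+2)·(f_{d−1}(Σ) − β_{d−1}(Σ) − 1). -/

import Mathlib

open Finset

/-- A finite simplicial complex on a finite vertex type `V`:
a finite nonempty collection of nonempty finite sets (faces)
closed under taking nonempty subsets. -/
structure SComplex (V : Type) [DecidableEq V] [Fintype V] where
  faces : Finset (Finset V)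
  nonempty : faces.Nonempty
  no_empty : ∀ σ ∈ faces, σ ≠ ∅
  down_closed : ∀ σ ∈ faces, ∀ τ, τ ⊆ σ → τ ≠ ∅ → τ ∈ faces

namespace SComplex

variable {V : Type} [DecidableEq V] [Fintype V]

/-- The set of faces of dimension `i` (i.e. of cardinality `i+1`). -/
def facesDim (K : SComplex V) (i : ℕ) : Finset (Finset V) :=
  K.faces.filter (fun σ => σ.card = i + 1)

/-- `fnum K i` is the face number `f_i`. -/
def fnum (K : SComplex V) (i : ℕ) : ℕ := (K.facesDim i).card

/-- The space of `Z_2` `i`-chains: functions from the `i`-faces to `Z_2`. -/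
abbrev Chains (K : SComplex V) (i : ℕ) : Type := {σ // σ ∈ K.facesDim i} → ZMod 2

/-- The boundary map `∂_i : C_i → C_{i-1}` (and `∂_0 = 0`): the value of `∂ c` on an
`(i-1)`-face `τ` is the sum over `i`-faces `σ ⊇ τ` of `c σ`. -/
def boundary (K : SComplex V) (i : ℕ) : Chains K i →ₗ[ZMod 2] Chains K (i - 1) :=
  if i = 0 then 0 else
  { toFun := fun c τ =>
      ∑ σ : {σ // σ ∈ K.facesDim i}, if (τ : Finset V) ⊆ (σ : Finset V) then c σ else 0
    map_add' := by
      intro c d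
      funext τ
      show (∑ σ : {σ // σ ∈ K.facesDim i}, _) = _
      rw [Pi.add_apply, ← Finset.sum_add_distrib]
      apply Finset.sum_congr rfl
      intro σ _
      by_cases h : (τ : Finset V) ⊆ (σ : Finset V) <;> simp [h]
    map_smul' := by
      intro a c
      funext τ
      show (∑ σ : {σ // σ ∈ K.facesDim i}, _) = _
      rw [RingHom.id_apply, Pi.smul_apply, smul_eq_mul, Finset.mul_sum]
      apply Finset.sum_congr rfl
      intro σ _
      by_cases h : (τ : Finset V) ⊆ (σ : Finset V) <;> simp [h] }

/-- The `i`-th `Z_2` Betti number: `dim ker ∂_i − rank ∂_{i+1}`. -/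
noncomputable def betti (K : SComplex V) (i : ℕ) : ℕ :=
  Module.finrank (ZMod 2) (LinearMap.ker (K.boundary i)) -
    Module.finrank (ZMod 2) (LinearMap.range (K.boundary (i + 1)))

/-- The number of `i`-faces in the support of a chain. -/
def suppCard {K : SComplex V} {i : ℕ} (c : Chains K i) : ℕ :=
  (Finset.univ.filter (fun σ => c σ ≠ 0)).card

/-- The girth: the minimal support size of a nonzero `d`-cycle. -/
noncomputable def girth (K : SComplex V) (d : ℕ) : ℕ :=
  sInf {n | ∃ c : Chains K d, c ∈ LinearMap.ker (K.boundary d) ∧ c ≠ 0 ∧ suppCard c = n}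

/-- `Z_d(K)` admits an `m`-complete basis: a basis of the space of `d`-cycles such that every
`d`-face lies in the support of at most `m` basis elements. -/
def HasCompleteBasis (K : SComplex V) (d m : ℕ) : Prop :=
  ∃ (ι : Type) (_ : Fintype ι) (b : Module.Basis ι (ZMod 2) (LinearMap.ker (K.boundary d))),
    ∀ σ : {σ // σ ∈ K.facesDim d},
      (Finset.univ.filter (fun i : ι => (b i).1 σ ≠ 0)).card ≤ m

/-- `K` is `d`-dimensional: `d` is the maximal dimension of a face. -/
def IsDim (K : SComplex V) (d : ℕ) : Prop :=
  (∀ σ ∈ K.faces, σ.card ≤ d + 1) ∧ ∃ σ ∈ K.faces, σ.card = d + 1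

/-- `K` is pure `d`-dimensional: every face is contained in a `d`-face. -/
def IsPure (K : SComplex V) (d : ℕ) : Prop :=
  ∀ σ ∈ K.faces, ∃ τ ∈ K.faces, σ ⊆ τ ∧ τ.card = d + 1

/-- A `d`-dimensional complex is balanced if its vertices can be colored with `d+1` colors
so that the coloring is injective on every face. -/
def IsBalanced (K : SComplex V) (d : ℕ) : Prop :=
  ∃ coloring : V → Fin (d + 1), ∀ σ ∈ K.faces, Set.InjOn coloring (σ : Set V)

/-- The `d`-skeleton of `K`: all faces of dimension at most `d`. -/
def skeleton (K : SComplex V) (d : ℕ) : SComplex V where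
  faces := K.faces.filter (fun σ => σ.card ≤ d + 1)
  nonempty := by
    obtain ⟨σ, hσ⟩ := K.nonempty
    obtain ⟨v, hv⟩ := Finset.nonempty_iff_ne_empty.mpr (K.no_empty σ hσ)
    refine ⟨{v}, Finset.mem_filter.mpr ⟨K.down_closed σ hσ {v}
      (Finset.singleton_subset_iff.mpr hv) (Finset.singleton_ne_empty v), by simp⟩⟩
  no_empty := by
    intro σ hσ
    exact K.no_empty σ (Finset.mem_filter.mp hσ).1
  down_closed := by
    intro σ hσ τ hτσ hτ
    rw [Finset.mem_filter] at hσ ⊢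
    exact ⟨K.down_closed σ hσ.1 τ hτσ hτ, le_trans (Finset.card_le_card hτσ) hσ.2⟩

end SComplex

namespace SComplex

variable {V : Type} [DecidableEq V] [Fintype V]

lemma mem_faces_of_facesDim {K : SComplex V} {i : ℕ} {σ : Finset V}
    (h : σ ∈ K.facesDim i) : σ ∈ K.faces := (Finset.mem_filter.mp h).1

lemma card_of_facesDim {K : SComplex V} {i : ℕ} {σ : Finset V}
    (h : σ ∈ K.facesDim i) : σ.card = i + 1 := (Finset.mem_filter.mp h).2

lemma boundary_apply (K : SComplex V) {i : ℕ} (hi : i ≠ 0) (c : Chains K i)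
    (τ : {τ // τ ∈ K.facesDim (i - 1)}) :
    K.boundary i c τ =
      ∑ σ : {σ // σ ∈ K.facesDim i},
        if (τ : Finset V) ⊆ (σ : Finset V) then c σ else 0 := by
  rw [boundary, if_neg hi]
  rfl

lemma erase_mem_facesDim {K : SComplex V} {d : ℕ} (hd : 1 ≤ d) {σ : Finset V}
    (h : σ ∈ K.facesDim d) {x : V} (hx : x ∈ σ) :
    σ.erase x ∈ K.facesDim (d - 1) := by
  have h1 := mem_faces_of_facesDim h
  have h2 := card_of_facesDim h
  have hc : (σ.erase x).card = d := by rw [Finset.card_erase_of_mem hx, h2]; omega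
  have hne : σ.erase x ≠ ∅ := by
    intro h0; rw [h0, Finset.card_empty] at hc; omega
  refine Finset.mem_filter.mpr ⟨K.down_closed σ h1 _ (Finset.erase_subset x σ) hne, ?_⟩
  omega

lemma zmod2_eq_one : ∀ y : ZMod 2, y ≠ 0 → y = 1 := by decide

lemma girth_lower (K : SComplex V) {d : ℕ} (hd : 1 ≤ d) (c : Chains K d)
    (hker : K.boundary d c = 0) (hnz : c ≠ 0) :
    d + 2 ≤ suppCard c := by
  classical
  have hex0 : ∃ σ, c σ ≠ 0 := by
    by_contra h; push_neg at h; exact hnz (funext h)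
  obtain ⟨σ0, hσ0⟩ := hex0
  have hcard0 := card_of_facesDim σ0.2
  have hex : ∀ x : {x // x ∈ (σ0 : Finset V)},
      ∃ σ : {σ // σ ∈ K.facesDim d},
        σ ≠ σ0 ∧ (σ0 : Finset V).erase x.1 ⊆ (σ : Finset V) ∧ c σ ≠ 0 := by
    intro x
    by_contra hcon
    push_neg at hcon
    have hτ : (σ0 : Finset V).erase x.1 ∈ K.facesDim (d - 1) :=
      erase_mem_facesDim hd σ0.2 x.2
    have h0 : K.boundary d c ⟨_, hτ⟩ = 0 := by rw [hker]; rfl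
    rw [boundary_apply K (by omega) c ⟨_, hτ⟩] at h0
    have hs : (∑ σ : {σ // σ ∈ K.facesDim d},
        if ((σ0 : Finset V).erase x.1 : Finset V) ⊆ (σ : Finset V) then c σ else 0) = c σ0 := by
      rw [Finset.sum_eq_single σ0]
      · rw [if_pos (Finset.erase_subset x.1 (σ0 : Finset V))]
      · intro b _ hbne
        by_cases hb : (σ0 : Finset V).erase x.1 ⊆ (b : Finset V)
        · rw [if_pos hb]
          exact hcon b hbne hb
        · rw [if_neg hb]
      · intro h; exact absurd (Finset.mem_univ σ0) h
    rw [hs] at h0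
    exact hσ0 h0
  choose f hfne hfsub hfnz using hex
  set S : Finset {σ // σ ∈ K.facesDim d} := Finset.univ.filter (fun σ => c σ ≠ 0) with hS
  have hσ0S : σ0 ∈ S := Finset.mem_filter.mpr ⟨Finset.mem_univ _, hσ0⟩
  have hinj : Set.InjOn f ((Finset.univ : Finset {x // x ∈ (σ0 : Finset V)}) : Set _) := by
    intro x _ y _ hxy
    by_contra hne
    have hxy' : x.1 ≠ y.1 := fun h => hne (Subtype.ext h)
    have hsub : (σ0 : Finset V) ⊆ (f x : Finset V) := by
      intro a ha
      by_cases hax : a = x.1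
      · have hmem : a ∈ (σ0 : Finset V).erase y.1 :=
          Finset.mem_erase.mpr ⟨by rw [hax]; exact hxy', ha⟩
        have h5 := hfsub y hmem
        rw [← hxy] at h5
        exact h5
      · exact hfsub x (Finset.mem_erase.mpr ⟨hax, ha⟩)
    have hcards : (f x : Finset V).card ≤ (σ0 : Finset V).card := by
      rw [hcard0, card_of_facesDim (f x).2]
    have heq : (σ0 : Finset V) = (f x : Finset V) :=
      Finset.eq_of_subset_of_card_le hsub hcards
    exact hfne x (Subtype.ext heq.symm)
  have hmaps : ∀ x ∈ (Finset.univ : Finset {x // x ∈ (σ0 : Finset V)}), f x ∈ S.erase σ0 :=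
    fun x _ => Finset.mem_erase.mpr ⟨hfne x, Finset.mem_filter.mpr ⟨Finset.mem_univ _, hfnz x⟩⟩
  have hle := Finset.card_le_card_of_injOn f hmaps hinj
  have h1 : (Finset.univ : Finset {x // x ∈ (σ0 : Finset V)}).card = d + 1 := by
    rw [Finset.card_univ, Fintype.card_coe, hcard0]
  have h2 : (S.erase σ0).card + 1 = S.card := Finset.card_erase_add_one hσ0S
  have h3 : suppCard c = S.card := rfl
  omega

lemma bb_zero (K : SComplex V) {d : ℕ} (hd : 1 ≤ d) (c : Chains K d) :
    K.boundary (d - 1) (K.boundary d c) = 0 := by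
  classical
  rcases eq_or_lt_of_le hd with h1 | h2
  · have hd1 : d = 1 := h1.symm
    subst hd1
    show (K.boundary 0) ((K.boundary 1) c) = 0
    have h0 : K.boundary 0 = (0 : Chains K 0 →ₗ[ZMod 2] Chains K (0-1)) := by
      rw [boundary]; simp
    rw [h0]
    simp
  · have hd1 : d - 1 ≠ 0 := by omega
    funext ρ
    rw [Pi.zero_apply, boundary_apply K hd1 _ ρ]
    have hstep : ∀ τ : {τ // τ ∈ K.facesDim (d - 1)},
        (if (ρ : Finset V) ⊆ (τ : Finset V) then K.boundary d c τ else 0)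
        = ∑ σ : {σ // σ ∈ K.facesDim d},
            if (ρ : Finset V) ⊆ (τ : Finset V) ∧ (τ : Finset V) ⊆ (σ : Finset V)
            then c σ else 0 := by
      intro τ
      by_cases h : (ρ : Finset V) ⊆ (τ : Finset V)
      · rw [if_pos h, boundary_apply K (by omega) c τ]
        refine Finset.sum_congr rfl fun σ _ => ?_
        by_cases h2' : (τ : Finset V) ⊆ (σ : Finset V) <;> simp [h, h2']
      · rw [if_neg h]
        exact (Finset.sum_eq_zero fun σ _ => by simp [h]).symm
    rw [Finset.sum_congr rfl fun τ _ => hstep τ, Finset.sum_comm]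
    refine Finset.sum_eq_zero fun σ _ => ?_
    rw [← Finset.sum_filter, Finset.sum_const]
    have hfin : ∀ s : Finset {τ // τ ∈ K.facesDim (d - 1)},
        2 ∣ s.card → s.card • c σ = 0 := by
      rintro s ⟨m, hm⟩
      rw [hm, mul_comm 2 m, mul_nsmul]
      have h2z : ∀ y : ZMod 2, 2 • y = 0 := by decide
      rw [h2z]
    apply hfin
    by_cases hρσ : (ρ : Finset V) ⊆ (σ : Finset V)
    · have hcard2 : ((σ : Finset V) \ (ρ : Finset V)).card = 2 := by
        have hcσ : (σ : Finset V).card = d + 1 := card_of_facesDim σ.2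
        have hcρ : (ρ : Finset V).card = d - 1 := by
          have := card_of_facesDim ρ.2; omega
        rw [Finset.card_sdiff_of_subset hρσ, hcσ, hcρ]; omega
      refine ⟨1, ?_⟩
      rw [mul_one, ← hcard2]
      symm
      refine Finset.card_bij
        (fun x hx => (⟨(σ : Finset V).erase x,
          erase_mem_facesDim hd σ.2 (Finset.mem_sdiff.mp hx).1⟩ :
            {τ // τ ∈ K.facesDim (d - 1)})) ?_ ?_ ?_
      · intro x hx
        obtain ⟨hxσ, hxρ⟩ := Finset.mem_sdiff.mp hx
        simp only [Finset.mem_filter, Finset.mem_univ, true_and]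
        refine ⟨?_, Finset.erase_subset _ _⟩
        intro a ha
        exact Finset.mem_erase.mpr ⟨fun h => hxρ (h ▸ ha), hρσ ha⟩
      · intro x hx y hy hxy
        obtain ⟨hxσ, -⟩ := Finset.mem_sdiff.mp hx
        by_contra hne
        have hxy' : (σ : Finset V).erase x = (σ : Finset V).erase y := by
          simpa using congrArg Subtype.val hxy
        have : x ∈ (σ : Finset V).erase x := by
          rw [hxy']; exact Finset.mem_erase.mpr ⟨hne, hxσ⟩
        exact (Finset.notMem_erase x _) this
      · intro τ hτ
        simp only [Finset.mem_filter, Finset.mem_univ, true_and] at hτ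
        obtain ⟨hρτ, hτσ⟩ := hτ
        have hcτ : (τ : Finset V).card = d := by
          have := card_of_facesDim τ.2; omega
        have hcσ : (σ : Finset V).card = d + 1 := card_of_facesDim σ.2
        have hone : ((σ : Finset V) \ (τ : Finset V)).card = 1 := by
          rw [Finset.card_sdiff_of_subset hτσ, hcτ, hcσ]; omega
        obtain ⟨x, hx⟩ := Finset.card_eq_one.mp hone
        have hxmem : x ∈ (σ : Finset V) \ (τ : Finset V) := by
          rw [hx]; exact Finset.mem_singleton_self x
        obtain ⟨hxσ, hxτ⟩ := Finset.mem_sdiff.mp hxmem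
        refine ⟨x, Finset.mem_sdiff.mpr ⟨hxσ, fun hxρ => hxτ (hρτ hxρ)⟩, ?_⟩
        apply Subtype.ext
        show (σ : Finset V).erase x = (τ : Finset V)
        apply Finset.eq_of_subset_of_card_le
        · intro a ha
          obtain ⟨hax, haσ⟩ := Finset.mem_erase.mp ha
          by_contra haτ
          have : a ∈ (σ : Finset V) \ (τ : Finset V) := Finset.mem_sdiff.mpr ⟨haσ, haτ⟩
          rw [hx, Finset.mem_singleton] at this
          exact hax this
        · rw [hcτ, Finset.card_erase_of_mem hxσ, hcσ]; omega
    · refine ⟨0, ?_⟩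
      rw [mul_zero, Finset.card_eq_zero]
      exact Finset.filter_false_of_mem fun τ _ h => hρσ (h.1.trans h.2)

end SComplex

open SComplex
set_option maxHeartbeats 1000000 in
/-- Corollary 5. -/
theorem cor5 {V : Type} [DecidableEq V] [Fintype V] (d : ℕ) (hd : 1 ≤ d)
    (K : SComplex V) (hdim : K.IsDim d)
    (hβ : 1 ≤ K.betti d) (hcb : K.HasCompleteBasis d 2) :
    (d : ℤ) * (K.fnum d : ℤ) ≤
      ((d : ℤ) + 2) * ((K.fnum (d - 1) : ℤ) - (K.betti (d - 1) : ℤ) - 1) := by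
  classical
  haveI : Fact (Nat.Prime 2) := ⟨Nat.prime_two⟩
  obtain ⟨e, rfl⟩ : ∃ e, d = e + 1 := ⟨d - 1, by omega⟩
  show ((e + 1 : ℕ) : ℤ) * (K.fnum (e + 1) : ℤ) ≤
      (((e + 1 : ℕ) : ℤ) + 2) * ((K.fnum e : ℤ) - (K.betti e : ℤ) - 1)
  obtain ⟨ι, hι, b, hb2⟩ := hcb
  letI := hι
  have hfr : ∀ i : ℕ, Module.finrank (ZMod 2) (Chains K i) = K.fnum i := by
    intro i
    rw [Module.finrank_pi, Fintype.card_coe]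
    rfl
  -- betti (e+1) = finrank of the cycle space
  have hr0 : LinearMap.range (K.boundary (e + 1 + 1)) = ⊥ := by
    rw [LinearMap.range_eq_bot]
    apply LinearMap.ext
    intro c
    have hc0 : c = 0 := by
      funext σ
      have h1 := card_of_facesDim σ.2
      have h2 := hdim.1 σ.1 (mem_faces_of_facesDim σ.2)
      omega
    rw [hc0, map_zero]
    rfl
  have hbettid : K.betti (e + 1) =
      Module.finrank (ZMod 2) (LinearMap.ker (K.boundary (e + 1))) := by
    unfold betti
    rw [hr0, finrank_bot]
    omega
  have hcardι : Fintype.card ι =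
      Module.finrank (ZMod 2) (LinearMap.ker (K.boundary (e + 1))) :=
    (Module.finrank_eq_card_basis b).symm
  have hιne : Nonempty ι := by
    rw [← Fintype.card_pos_iff, hcardι, ← hbettid]
    exact hβ
  -- the sum of all basis elements
  set z : LinearMap.ker (K.boundary (e + 1)) := ∑ i : ι, b i with hz
  have hznz : z ≠ 0 := by
    intro h0
    have hli := b.linearIndependent
    rw [Fintype.linearIndependent_iff] at hli
    have := hli (fun _ => (1 : ZMod 2)) (by simpa [hz] using h0) (Classical.arbitrary ι)
    exact one_ne_zero this
  have hznz' : (z : Chains K (e + 1)) ≠ 0 := fun h => hznz (Subtype.ext h)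
  -- cover counts
  set cov : {σ // σ ∈ K.facesDim (e + 1)} → ℕ :=
    fun σ => (Finset.univ.filter (fun i : ι => (b i).1 σ ≠ 0)).card with hcov
  have hzval : ∀ σ, (z : Chains K (e + 1)) σ = (cov σ : ZMod 2) := by
    intro σ
    have h1 : (z : Chains K (e + 1)) σ = ∑ i : ι, (b i).1 σ := by
      rw [hz]
      rw [AddSubmonoidClass.coe_finset_sum]
      rw [Finset.sum_apply]
    rw [h1, ← Finset.sum_filter_ne_zero]
    have h2 : ∀ i ∈ Finset.univ.filter (fun i : ι => (b i).1 σ ≠ 0),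
        (b i).1 σ = 1 := by
      intro i hi
      exact zmod2_eq_one _ (Finset.mem_filter.mp hi).2
    rw [Finset.sum_congr rfl h2, Finset.sum_const, nsmul_eq_mul, mul_one]
  have hcovsupp : ∀ σ, (z : Chains K (e + 1)) σ ≠ 0 → cov σ = 1 := by
    intro σ hσ
    have h2 : cov σ ≤ 2 := hb2 σ
    have hval := hzval σ
    have h3 : cov σ = 0 ∨ cov σ = 1 ∨ cov σ = 2 := by omega
    rcases h3 with h | h | h
    · rw [h] at hval; simp at hval; exact absurd hval hσ
    · exact h
    · exfalso
      apply hσ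
      rw [hval, h]
      exact ZMod.natCast_self 2
  have hsupp_sum : ∀ cc : Chains K (e + 1),
      suppCard cc = ∑ σ, if cc σ ≠ 0 then 1 else 0 := by
    intro cc
    rw [suppCard, Finset.card_filter]
  -- double counting
  have hswap : ∑ i : ι, suppCard ((b i) : Chains K (e + 1)) =
      ∑ σ : {σ // σ ∈ K.facesDim (e + 1)}, cov σ := by
    simp only [hsupp_sum]
    rw [Finset.sum_comm]
    refine Finset.sum_congr rfl fun σ _ => ?_
    simp only [hcov]
    rw [Finset.card_filter]
  have hglow : ∀ i : ι, e + 1 + 2 ≤ suppCard ((b i) : Chains K (e + 1)) := by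
    intro i
    refine girth_lower K (by omega) _
      ((b i).2 : K.boundary (e + 1) ((b i) : Chains K (e + 1)) = 0) ?_
    exact fun h => b.ne_zero i (Subtype.ext h)
  have hNlow : (e + 1 + 2) * Fintype.card ι ≤
      ∑ i : ι, suppCard ((b i) : Chains K (e + 1)) := by
    calc (e + 1 + 2) * Fintype.card ι = ∑ _i : ι, (e + 1 + 2) := by
          rw [Finset.sum_const, Finset.card_univ, smul_eq_mul, mul_comm]
      _ ≤ _ := Finset.sum_le_sum fun i _ => hglow i
  have hzsupp : e + 1 + 2 ≤ suppCard (z : Chains K (e + 1)) :=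
    girth_lower K (by omega) _
      (z.2 : K.boundary (e + 1) (z : Chains K (e + 1)) = 0) hznz'
  have hup : (∑ σ : {σ // σ ∈ K.facesDim (e + 1)}, cov σ) +
      suppCard (z : Chains K (e + 1)) ≤ 2 * K.fnum (e + 1) := by
    rw [hsupp_sum, ← Finset.sum_add_distrib]
    calc ∑ σ : {σ // σ ∈ K.facesDim (e + 1)},
          (cov σ + if (z : Chains K (e + 1)) σ ≠ 0 then 1 else 0)
        ≤ ∑ _σ : {σ // σ ∈ K.facesDim (e + 1)}, 2 := by
          refine Finset.sum_le_sum fun σ _ => ?_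
          by_cases h : (z : Chains K (e + 1)) σ ≠ 0
          · rw [if_pos h, hcovsupp σ h]
          · rw [if_neg h]
            have h2 : cov σ ≤ 2 := hb2 σ
            omega
      _ = 2 * K.fnum (e + 1) := by
          rw [Finset.sum_const, Finset.card_univ, Fintype.card_coe, smul_eq_mul, mul_comm]
          rfl
  have hkey : (e + 1 + 2) * (Fintype.card ι + 1) ≤ 2 * K.fnum (e + 1) := by
    calc (e + 1 + 2) * (Fintype.card ι + 1)
        = (e + 1 + 2) * Fintype.card ι + (e + 1 + 2) := by ring
      _ ≤ (∑ σ : {σ // σ ∈ K.facesDim (e + 1)}, cov σ) +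
            suppCard (z : Chains K (e + 1)) := by
          rw [← hswap]
          exact Nat.add_le_add hNlow hzsupp
      _ ≤ 2 * K.fnum (e + 1) := hup
  -- rank facts
  have hrn : Module.finrank (ZMod 2) (LinearMap.range (K.boundary (e + 1))) +
      Module.finrank (ZMod 2) (LinearMap.ker (K.boundary (e + 1))) = K.fnum (e + 1) := by
    rw [LinearMap.finrank_range_add_finrank_ker, hfr]
  have hrange_le : LinearMap.range (K.boundary (e + 1)) ≤
      LinearMap.ker (K.boundary e) := by
    rintro y ⟨c, rfl⟩
    exact LinearMap.mem_ker.mpr (bb_zero K (d := e + 1) (by omega) c)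
  have hrk : Module.finrank (ZMod 2) (LinearMap.range (K.boundary (e + 1))) ≤
      Module.finrank (ZMod 2) (LinearMap.ker (K.boundary e)) :=
    Submodule.finrank_mono hrange_le
  have hkle : Module.finrank (ZMod 2) (LinearMap.ker (K.boundary e)) ≤ K.fnum e := by
    rw [← hfr]
    exact Submodule.finrank_le _
  have hbettid1 : K.betti e =
      Module.finrank (ZMod 2) (LinearMap.ker (K.boundary e)) -
        Module.finrank (ZMod 2) (LinearMap.range (K.boundary (e + 1))) := by
    unfold betti
    rfl
  -- final arithmetic over ℤ
  set A : ℕ := Module.finrank (ZMod 2) (LinearMap.ker (K.boundary (e + 1))) with hA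
  set R : ℕ := Module.finrank (ZMod 2) (LinearMap.range (K.boundary (e + 1))) with hR
  set Kk : ℕ := Module.finrank (ZMod 2) (LinearMap.ker (K.boundary e)) with hK
  have hβcast : (K.betti e : ℤ) = (Kk : ℤ) - (R : ℤ) := by
    rw [hbettid1, Nat.cast_sub hrk]
  rw [hβcast]
  have hkey' : (((e : ℤ) + 1) + 2) * ((A : ℤ) + 1) ≤ 2 * (K.fnum (e + 1) : ℤ) := by
    have h5 := hkey
    rw [hcardι] at h5
    exact_mod_cast h5
  have hrn' : (R : ℤ) + (A : ℤ) = (K.fnum (e + 1) : ℤ) := by exact_mod_cast hrn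
  have hrk' : (R : ℤ) ≤ (Kk : ℤ) := by exact_mod_cast hrk
  have hkle' : (Kk : ℤ) ≤ (K.fnum e : ℤ) := by exact_mod_cast hkle
  have hP1 : (0 : ℤ) ≤ (((e : ℤ) + 1) + 2) * ((K.fnum e : ℤ) - (Kk : ℤ)) := by
    apply mul_nonneg
    · positivity
    · omega
  push_cast
  nlinarith [hP1, hkey', hrn']
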